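/- Let E be a Banach space with a normalized 1-unconditional basis (e_n) with biorthogonal functionals (e_n*). Suppose there exists a sequence (t^{(k)})_{k=1}^∞ of finitely supported vectors in E* with nonnegative coordinates with respect to (e_n*), such that ‖t^{(k)}‖_{E*} ≤ 1 for all k and the sum of the coordinates of t^{(k)} tends to ∞ as k → ∞. Then the E-direct sum X = (⊕_{n=1}^∞ c0)_E of countably many copies of c0 does not have summable Szlenk index. In particular, if E = T is Tsirelson's space with its canonical basis, then T(c0) fails to have summable Szlenk index. -/

import Mathlib

open Filter Topology Set
open scoped ENNReal NNReal

noncomputable section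

/-- The `ε`-Szlenk derivation of a subset of the dual space, w.r.t. the weak* topology. -/
def szlenkDeriv {X : Type*} [NormedAddCommGroup X] [NormedSpace ℝ X] (ε : ℝ)
    (K : Set (StrongDual ℝ X)) : Set (StrongDual ℝ X) :=
  {f | f ∈ K ∧ ∀ U : Set (WeakDual ℝ X), IsOpen U →
    StrongDual.toWeakDual f ∈ U →
    ε < Metric.diam {g | g ∈ K ∧ StrongDual.toWeakDual g ∈ U}}

/-- Iterated Szlenk derivations `ι_{ε₁}⋯ι_{εₙ} K` for a list `[ε₁, …, εₙ]`. -/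
def szlenkDerivList {X : Type*} [NormedAddCommGroup X] [NormedSpace ℝ X] (l : List ℝ)
    (K : Set (StrongDual ℝ X)) : Set (StrongDual ℝ X) :=
  l.foldr szlenkDeriv K

/-- The closed unit ball of the dual space. -/
def dualUnitBall (X : Type*) [NormedAddCommGroup X] [NormedSpace ℝ X] :
    Set (StrongDual ℝ X) :=
  Metric.closedBall 0 1

/-- `X` has summable Szlenk index with constant `M`. -/
def HasSummableSzlenkWith (X : Type*) [NormedAddCommGroup X] [NormedSpace ℝ X] (M : ℝ) : Prop :=
  ∀ l : List ℝ, (∀ ε ∈ l, 0 < ε) → (szlenkDerivList l (dualUnitBall X)).Nonempty → l.sum ≤ M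

/-- `X` has summable Szlenk index. -/
def HasSummableSzlenk (X : Type*) [NormedAddCommGroup X] [NormedSpace ℝ X] : Prop :=
  ∃ M > 0, HasSummableSzlenkWith X M

/-- When some finite iterate of the Szlenk derivation kills the dual ball, the ε-Szlenk index
`Sz(X, ε)` is the least `n : ℕ` with `ι_ε^n B_{X*} = ∅`. -/
def szlenkIdx (X : Type*) [NormedAddCommGroup X] [NormedSpace ℝ X] (ε : ℝ) : ℕ :=
  sInf {n : ℕ | (szlenkDeriv ε)^[n] (dualUnitBall X) = ∅}

/-- `Sz(X) ≤ ω`: the ε-Szlenk index is finite for every ε > 0. -/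
def SzlenkLeOmega (X : Type*) [NormedAddCommGroup X] [NormedSpace ℝ X] : Prop :=
  ∀ ε : ℝ, 0 < ε → ∃ n : ℕ, (szlenkDeriv ε)^[n] (dualUnitBall X) = ∅

/-- `Sz(X) = ω`: finite ε-Szlenk indices, unbounded as ε → 0. -/
def SzlenkEqOmega (X : Type*) [NormedAddCommGroup X] [NormedSpace ℝ X] : Prop :=
  SzlenkLeOmega X ∧ ∀ N : ℕ, ∃ ε : ℝ, 0 < ε ∧ ((szlenkDeriv ε)^[N] (dualUnitBall X)).Nonempty

/-- `X` has Szlenk power type `v`: `log Sz(X,ε)/|log ε| → v` as `ε → 0⁺`. -/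
def HasSzlenkPowerType (X : Type*) [NormedAddCommGroup X] [NormedSpace ℝ X] (v : ℝ) : Prop :=
  Tendsto (fun ε : ℝ => Real.log (szlenkIdx X ε) / |Real.log ε|) (𝓝[>] (0:ℝ)) (𝓝 v)

/-- `(Σᵢ |a i|^p)^{1/p}`, the maximum of the `|a i|` when `p = ∞`. -/
def pNorm (p : ℝ≥0∞) {ι : Type*} [Fintype ι] (a : ι → ℝ) : ℝ :=
  if p = ∞ then ((Finset.univ.sup fun i => ‖a i‖₊ : ℝ≥0) : ℝ)
  else (∑ i, |a i| ^ p.toReal) ^ (1 / p.toReal)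

/-- A normed space `Z` with coordinate functionals `coord` is `C`-asymptotic `ℓ_p`:
every block sequence `x₁, …, xₙ` of finitely supported vectors with successive supports
contained in `[n, ∞)` (1-based basis indexing; index `m : ℕ` is the `(m+1)`-st basis vector)
satisfies `C⁻¹ (Σ‖xⱼ‖^p)^{1/p} ≤ ‖Σ xⱼ‖ ≤ C (Σ‖xⱼ‖^p)^{1/p}`. -/
def IsAsymptoticLp (p : ℝ≥0∞) (C : ℝ) {Z : Type*} [NormedAddCommGroup Z]
    (coord : ℕ → Z → ℝ) : Prop :=
  ∀ (n : ℕ) (x : Fin n → Z),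
    (∀ j, {m | coord m (x j) ≠ 0}.Finite) →
    (∀ j m, coord m (x j) ≠ 0 → n ≤ m + 1) →
    (∀ (j k : Fin n), j < k → ∀ m m', coord m (x j) ≠ 0 → coord m' (x k) ≠ 0 → m < m') →
    C⁻¹ * pNorm p (fun j => ‖x j‖) ≤ ‖∑ j, x j‖ ∧
      ‖∑ j, x j‖ ≤ C * pNorm p (fun j => ‖x j‖)

/-- `(e, e')` is a 1-unconditional Schauder basis of `E` with biorthogonal functionals `e'`. -/
structure IsBasis1Unconditional {E : Type*} [NormedAddCommGroup E] [NormedSpace ℝ E]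
    (e : ℕ → E) (e' : ℕ → StrongDual ℝ E) : Prop where
  biorth : ∀ m n, e' m (e n) = if m = n then 1 else 0
  expansion : ∀ x : E, HasSum (fun n => e' n x • e n) x
  unconditional : ∀ (x : E) (σ : ℕ → ℝ), (∀ n, σ n = 1 ∨ σ n = -1) →
    ∃ y : E, HasSum (fun n => (σ n * e' n x) • e n) y ∧ ‖y‖ = ‖x‖

/-- The basis `e` of `E` is shrinking: the norm of the restriction of any functional to the
closed span of the tail of the basis tends to `0`. -/
def ShrinkingBasis {E : Type*} [NormedAddCommGroup E] [NormedSpace ℝ E] (e : ℕ → E) : Prop :=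
  ∀ f : StrongDual ℝ E,
    Tendsto (fun k =>
      ‖f.comp ((Submodule.span ℝ (e '' Set.Ici k)).topologicalClosure).subtypeL‖)
      atTop (𝓝 0)

/-- `T` realizes `Y` as the `E`-direct sum `(⊕ₙ Xₙ)_E` with respect to the basis `e`. -/
structure IsDirectSumE {E : Type*} [NormedAddCommGroup E] [NormedSpace ℝ E] (e : ℕ → E)
    (X : ℕ → Type*) [∀ n, NormedAddCommGroup (X n)] [∀ n, NormedSpace ℝ (X n)]
    {Y : Type*} [NormedAddCommGroup Y] [NormedSpace ℝ Y]
    (T : Y →ₗ[ℝ] ∀ n, X n) : Prop where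
  range_eq : Set.range T = {x | Summable fun n => ‖x n‖ • e n}
  norm_eq : ∀ y, ‖y‖ = ‖∑' n, ‖T y n‖ • e n‖

/-- `T` realizes `Y` as the c₀-sum `(⊕ₙ Xₙ)_{c₀}`. -/
structure IsC0Sum (X : ℕ → Type*) [∀ n, NormedAddCommGroup (X n)] [∀ n, NormedSpace ℝ (X n)]
    {Y : Type*} [NormedAddCommGroup Y] [NormedSpace ℝ Y] (T : Y →ₗ[ℝ] ∀ n, X n) : Prop where
  range_eq : Set.range T = {x | Tendsto (fun n => ‖x n‖) atTop (𝓝 0)}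
  norm_eq : ∀ y, ‖y‖ = ⨆ n, ‖T y n‖

/-- `T` realizes `Y` as the `ℓ_p`-sum `(⊕ₙ Xₙ)_{ℓ_p}`. -/
structure IsLpSum (p : ℝ) (X : ℕ → Type*) [∀ n, NormedAddCommGroup (X n)]
    [∀ n, NormedSpace ℝ (X n)] {Y : Type*} [NormedAddCommGroup Y] [NormedSpace ℝ Y]
    (T : Y →ₗ[ℝ] ∀ n, X n) : Prop where
  range_eq : Set.range T = {x | Summable fun n => ‖x n‖ ^ p}
  norm_eq : ∀ y, ‖y‖ = (∑' n, ‖T y n‖ ^ p) ^ (1/p)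

/-- `ν` is a norm on `X`. -/
structure IsNormOn {X : Type*} [NormedAddCommGroup X] [NormedSpace ℝ X] (ν : X → ℝ) : Prop where
  add_le : ∀ x y, ν (x + y) ≤ ν x + ν y
  smul_eq : ∀ (a : ℝ) (x : X), ν (a • x) = |a| * ν x
  eq_zero_iff : ∀ x : X, ν x = 0 ↔ x = 0

/-- The dual norm on `X*` corresponding to the (equivalent) norm `ν` on `X`. -/
def dualNormOf {X : Type*} [NormedAddCommGroup X] [NormedSpace ℝ X]
    (ν : X → ℝ) (f : StrongDual ℝ X) : ℝ :=
  sSup {r | ∃ x : X, ν x ≤ 1 ∧ r = |f x|}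

/-- `sup_n C_q(X_n) < ∞`: a common constant `c` with `Sz(Xₙ, ε) ≤ c ε^{-q}`. -/
def PowerTypeBddWith (X : ℕ → Type*) [∀ n, NormedAddCommGroup (X n)]
    [∀ n, NormedSpace ℝ (X n)] (q : ℝ) : Prop :=
  ∃ c : ℝ, ∀ n, ∀ ε ∈ Set.Ioo (0:ℝ) 1, (szlenkIdx (X n) ε : ℝ) ≤ c * ε ^ (-q)

/-- The fast growing hierarchy: `g 0 n = n + 1`, `g (k+1) n = (g k)^[n] n`. -/
def fastGrowing : ℕ → ℕ → ℕ
  | 0, n => n + 1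
  | k+1, n => (fastGrowing k)^[n] n

end


lemma szlenkDerivList_subset {X : Type*} [NormedAddCommGroup X] [NormedSpace ℝ X]
    (l : List ℝ) (K : Set (StrongDual ℝ X)) : szlenkDerivList l K ⊆ K := by
  induction l with
  | nil => exact fun _ h => h
  | cons x l ih => exact fun f hf => ih hf.1

set_option maxHeartbeats 1000000 in
/-- Suppose there are finitely supported vectors `t⁽ᵏ⁾ = Σₙ (a k) n • eₙ*`
in `E*` with nonnegative coordinates, `‖t⁽ᵏ⁾‖ ≤ 1` and the coordinate sums tending to `∞`.
Then the `E`-direct sum `X = (⊕ₙ c₀)_E` of countably many copies of `c₀` does not have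
summable Szlenk index. (For `E = T`, Tsirelson's space, such vectors exist since `T*` is not
isomorphic to `ℓ₁`; hence `T(c₀)` fails to have summable Szlenk index.) -/
theorem directSumE_c0_not_summableSzlenk
    (E : Type*) [NormedAddCommGroup E] [NormedSpace ℝ E] [CompleteSpace E]
    (e : ℕ → E) (e' : ℕ → StrongDual ℝ E)
    (hb : IsBasis1Unconditional e e') (hnorm : ∀ n, ‖e n‖ = 1)
    (a : ℕ → (ℕ →₀ ℝ)) (ha_nonneg : ∀ k n, 0 ≤ a k n)
    (ha_norm : ∀ k, ‖(a k).sum (fun n c => c • e' n)‖ ≤ 1)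
    (ha_tendsto : Tendsto (fun k => (a k).sum (fun _ c => c)) atTop atTop)
    (Y : Type*) [NormedAddCommGroup Y] [NormedSpace ℝ Y] [CompleteSpace Y]
    (T : Y →ₗ[ℝ] ∀ _ : ℕ, ZeroAtInftyContinuousMap ℕ ℝ)
    (hT : IsDirectSumE e (fun _ => ZeroAtInftyContinuousMap ℕ ℝ) T) :
    ¬ HasSummableSzlenk Y := by
  rintro ⟨M, hM0, hM⟩
  classical
  -- summability of the coordinate norms
  have hrange : ∀ y : Y, Summable fun n => ‖T y n‖ • e n := by
    intro y
    have h : T y ∈ Set.range T := Set.mem_range_self y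
    rw [hT.range_eq, Set.mem_setOf_eq] at h
    exact h
  have coord : ∀ (y : Y) (n : ℕ), e' n (∑' j, ‖T y j‖ • e j) = ‖T y n‖ := by
    intro y n
    rw [ContinuousLinearMap.map_tsum _ (hrange y)]
    have h1 : ∀ j, e' n (‖T y j‖ • e j) = if j = n then ‖T y n‖ else 0 := by
      intro j
      rcases eq_or_ne j n with h | h
      · subst h; simp [hb.biorth]
      · simp [hb.biorth, h, Ne.symm h]
    simp only [h1]
    exact (tsum_eq_single (f := fun z => if z = n then ‖T y n‖ else 0) n
      (fun j hj => if_neg hj)).trans (if_pos rfl)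
  have hTy_le : ∀ (y : Y) (n : ℕ), ‖T y n‖ ≤ ‖e' n‖ * ‖y‖ := by
    intro y n
    have h2 := (e' n).le_opNorm (∑' j, ‖T y j‖ • e j)
    rw [coord y n, ← hT.norm_eq y] at h2
    calc ‖T y n‖ ≤ ‖‖T y n‖‖ := le_abs_self _
      _ ≤ ‖e' n‖ * ‖y‖ := h2
  -- the coordinate evaluation functionals
  have hφex : ∃ φ : ℕ → ℕ → StrongDual ℝ Y, ∀ (n m : ℕ) (y : Y), φ n m y = T y n m := by
    refine ⟨fun n m =>
      LinearMap.mkContinuous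
        { toFun := fun y => T y n m
          map_add' := fun y z => by simp [map_add]
          map_smul' := fun r y => by simp [map_smul] }
        (‖e' n‖) (fun y => by
          have h1 : ‖T y n m‖ ≤ ‖T y n‖ := by
            rw [← ZeroAtInftyContinuousMap.norm_toBCF_eq_norm]
            exact (T y n).toBCF.norm_coe_le_norm m
          exact h1.trans (hTy_le y n)), fun _ _ _ => rfl⟩
  obtain ⟨φ, φ_apply⟩ := hφex
  -- the key norm estimate
  have key : ∀ (k : ℕ) (s : Finset ℕ) (c : ℕ → ℝ) (m : ℕ → ℕ),
      (∀ n ∈ s, |c n| ≤ a k n / 2) → ‖∑ n ∈ s, c n • φ n (m n)‖ ≤ 1 / 2 := by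
    intro k s c m hc
    refine ContinuousLinearMap.opNorm_le_bound _ (by norm_num) fun y => ?_
    have happ : (∑ n ∈ s, c n • φ n (m n)) y = ∑ n ∈ s, c n * T y n (m n) := by
      rw [ContinuousLinearMap.sum_apply]
      exact Finset.sum_congr rfl fun n _ => by
        rw [ContinuousLinearMap.smul_apply, φ_apply, smul_eq_mul]
    rw [happ, Real.norm_eq_abs]
    have hpt : ∀ n ∈ s, |c n * T y n (m n)| ≤ 1 / 2 * (a k n * ‖T y n‖) := by
      intro n hn
      rw [abs_mul]
      have h1 : |T y n (m n)| ≤ ‖T y n‖ := by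
        rw [← Real.norm_eq_abs, ← ZeroAtInftyContinuousMap.norm_toBCF_eq_norm]
        exact (T y n).toBCF.norm_coe_le_norm (m n)
      calc |c n| * |T y n (m n)| ≤ (a k n / 2) * ‖T y n‖ :=
            mul_le_mul (hc n hn) h1 (abs_nonneg _)
              (by have := ha_nonneg k n; linarith)
        _ = 1 / 2 * (a k n * ‖T y n‖) := by ring
    have hstep1 : |∑ n ∈ s, c n * T y n (m n)| ≤ ∑ n ∈ s, 1 / 2 * (a k n * ‖T y n‖) :=
      (Finset.abs_sum_le_sum_abs _ _).trans (Finset.sum_le_sum hpt)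
    have hnonneg : ∀ n, 0 ≤ a k n * ‖T y n‖ :=
      fun n => mul_nonneg (ha_nonneg k n) (norm_nonneg _)
    have hstep2 : ∑ n ∈ s, a k n * ‖T y n‖ ≤ ∑ n ∈ (a k).support, a k n * ‖T y n‖ := by
      have hsub1 : ∑ n ∈ s, a k n * ‖T y n‖ ≤ ∑ n ∈ s ∪ (a k).support, a k n * ‖T y n‖ :=
        Finset.sum_le_sum_of_subset_of_nonneg Finset.subset_union_left
          (fun n _ _ => hnonneg n)
      have hsub2 : ∑ n ∈ (a k).support, a k n * ‖T y n‖
          = ∑ n ∈ s ∪ (a k).support, a k n * ‖T y n‖ :=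
        Finset.sum_subset Finset.subset_union_right
          (fun n _ hn => by rw [Finsupp.notMem_support_iff.mp hn, zero_mul])
      rw [hsub2]
      exact hsub1
    have hstep3 : ∑ n ∈ (a k).support, a k n * ‖T y n‖ ≤ ‖y‖ := by
      have heval : ((a k).sum fun n c => c • e' n) (∑' j, ‖T y j‖ • e j)
          = ∑ n ∈ (a k).support, a k n * ‖T y n‖ := by
        rw [Finsupp.sum, ContinuousLinearMap.sum_apply]
        refine Finset.sum_congr rfl fun n _ => ?_
        rw [ContinuousLinearMap.smul_apply, coord y n, smul_eq_mul]
      have hop := ((a k).sum fun n c => c • e' n).le_opNorm (∑' j, ‖T y j‖ • e j)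
      rw [heval, ← hT.norm_eq y, Real.norm_eq_abs] at hop
      calc ∑ n ∈ (a k).support, a k n * ‖T y n‖
          ≤ |∑ n ∈ (a k).support, a k n * ‖T y n‖| := le_abs_self _
        _ ≤ ‖(a k).sum fun n c => c • e' n‖ * ‖y‖ := hop
        _ ≤ 1 * ‖y‖ := by
            have := ha_norm k
            exact mul_le_mul_of_nonneg_right this (norm_nonneg _)
        _ = ‖y‖ := one_mul _
    calc |∑ n ∈ s, c n * T y n (m n)| ≤ ∑ n ∈ s, 1 / 2 * (a k n * ‖T y n‖) := hstep1
      _ = 1 / 2 * ∑ n ∈ s, a k n * ‖T y n‖ := by rw [Finset.mul_sum]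
      _ ≤ 1 / 2 * ‖y‖ := by
          have := hstep2.trans hstep3
          linarith
  -- a "delta" vector in each coordinate, normalizing the evaluation functionals
  have hdelta : ∀ m : ℕ, ∃ d : ZeroAtInftyContinuousMap ℕ ℝ,
      (∀ x, d x = if x = m then 1 else 0) ∧ ‖d‖ ≤ 1 := by
    intro m
    refine ⟨⟨⟨fun x => if x = m then 1 else 0, continuous_of_discreteTopology⟩, ?_⟩,
      fun x => rfl, ?_⟩
    · rw [Filter.cocompact_eq_cofinite, Nat.cofinite_eq_atTop]
      refine Tendsto.congr' ?_ tendsto_const_nhds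
      filter_upwards [eventually_gt_atTop m] with x hx
      simp [Nat.ne_of_gt hx]
    · rw [← ZeroAtInftyContinuousMap.norm_toBCF_eq_norm]
      refine (BoundedContinuousFunction.norm_le zero_le_one).2 fun x => ?_
      show ‖if x = m then (1 : ℝ) else 0‖ ≤ 1
      split_ifs <;> norm_num
  have yvec : ∀ n m : ℕ, ∃ y : Y, (φ n m) y = 1 ∧ ‖y‖ ≤ 1 := by
    intro n m
    obtain ⟨d, hd, hdnorm⟩ := hdelta m
    have hmem : Pi.single n d ∈ Set.range T := by
      rw [hT.range_eq, Set.mem_setOf_eq]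
      refine summable_of_ne_finset_zero (s := {n}) fun j hj => ?_
      rw [Pi.single_eq_of_ne (by simpa using hj)]
      simp
    obtain ⟨y, hy⟩ := hmem
    refine ⟨y, ?_, ?_⟩
    · rw [φ_apply, hy]
      simp [Pi.single_eq_same, hd]
    · rw [hT.norm_eq y, hy,
        tsum_eq_single n (fun j hj => by rw [Pi.single_eq_of_ne hj]; simp),
        Pi.single_eq_same, norm_smul, Real.norm_eq_abs,
        abs_of_nonneg (norm_nonneg d), hnorm n, mul_one]
      exact hdnorm
  have hlow : ∀ (n m : ℕ) (c : ℝ), |c| ≤ ‖c • φ n m‖ := by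
    intro n m c
    obtain ⟨y, hy1, hy2⟩ := yvec n m
    have h := (c • φ n m).le_opNorm y
    rw [ContinuousLinearMap.smul_apply, hy1, smul_eq_mul, mul_one, Real.norm_eq_abs] at h
    calc |c| ≤ ‖c • φ n m‖ * ‖y‖ := h
      _ ≤ ‖c • φ n m‖ * 1 := mul_le_mul_of_nonneg_left hy2 (norm_nonneg _)
      _ = ‖c • φ n m‖ := mul_one _
  -- weak* convergence of the perturbations
  have hweak : ∀ (g : StrongDual ℝ Y) (c : ℝ) (n : ℕ),
      Tendsto (fun m => StrongDual.toWeakDual (g + c • φ n m)) atTop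
        (𝓝 (StrongDual.toWeakDual g)) := by
    intro g c n
    rw [tendsto_iff_forall_eval_tendsto_topDualPairing]
    intro y
    have h0 : Tendsto (fun m => T y n m) atTop (𝓝 0) := by
      have h := (T y n).zero_at_infty'
      rwa [Filter.cocompact_eq_cofinite, Nat.cofinite_eq_atTop] at h
    have h1 : Tendsto (fun m : ℕ => g y + c * T y n m) atTop (𝓝 (g y + c * 0)) :=
      tendsto_const_nhds.add (h0.const_mul c)
    rw [mul_zero, add_zero] at h1
    have heq : (fun m : ℕ => topDualPairing ℝ Y (StrongDual.toWeakDual (g + c • φ n m)) y)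
        = fun m : ℕ => g y + c * T y n m := by
      funext m
      rw [← φ_apply n m y]
      rfl
    rw [heq]
    exact h1
  -- the main induction producing elements of iterated derivations
  have main : ∀ (k : ℕ) (L : List ℕ), L.Nodup → (∀ n ∈ L, n ∈ (a k).support) →
      ∀ (s : Finset ℕ) (c : ℕ → ℝ) (m : ℕ → ℕ),
        (∀ n ∈ L, n ∉ s) → (∀ n ∈ s, |c n| ≤ a k n / 2) →
        (∑ n ∈ s, c n • φ n (m n)) ∈
          szlenkDerivList (L.map fun n => a k n / 2) (dualUnitBall Y) := by
    intro k L
    induction L with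
    | nil =>
      intro _ _ s c m _ hc
      show _ ∈ dualUnitBall Y
      rw [dualUnitBall, Metric.mem_closedBall, dist_zero_right]
      exact (key k s c m hc).trans (by norm_num)
    | cons n L' ih =>
      intro hnd hsupp s c m hdisj hc
      have hnL' : n ∉ L' := (List.nodup_cons.mp hnd).1
      have hnd' : L'.Nodup := (List.nodup_cons.mp hnd).2
      have hnsupp : n ∈ (a k).support := hsupp n List.mem_cons_self
      have hapos : 0 < a k n :=
        lt_of_le_of_ne (ha_nonneg k n) (Ne.symm (Finsupp.mem_support_iff.mp hnsupp))
      have hns : n ∉ s := hdisj n List.mem_cons_self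
      set f := ∑ j ∈ s, c j • φ j (m j) with hf
      show f ∈ szlenkDeriv (a k n / 2)
        (szlenkDerivList (L'.map fun i => a k i / 2) (dualUnitBall Y))
      refine ⟨ih hnd' (fun j hj => hsupp j (List.mem_cons_of_mem _ hj)) s c m
        (fun j hj => hdisj j (List.mem_cons_of_mem _ hj)) hc, ?_⟩
      intro U hU hfU
      have hUmem : U ∈ 𝓝 (StrongDual.toWeakDual f) := hU.mem_nhds hfU
      obtain ⟨m₀, hmU1, hmU2⟩ :=
        (((hweak f (a k n / 2) n).eventually hUmem).and
          (((hweak f (-(a k n / 2)) n).eventually hUmem))).exists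
      have mem_pert : ∀ v : ℝ, |v| ≤ a k n / 2 →
          f + v • φ n m₀ ∈ szlenkDerivList (L'.map fun i => a k i / 2) (dualUnitBall Y) := by
        intro v hv
        have hIH := ih hnd' (fun j hj => hsupp j (List.mem_cons_of_mem _ hj))
          (insert n s) (Function.update c n v) (Function.update m n m₀)
          (fun j hj => by
            simp only [Finset.mem_insert, not_or]
            exact ⟨fun h => hnL' (h ▸ hj), hdisj j (List.mem_cons_of_mem _ hj)⟩)
          (fun j hj => by
            rcases Finset.mem_insert.mp hj with h | h
            · subst h; rw [Function.update_self]; exact hv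
            · have hjn : j ≠ n := fun hh => hns (hh ▸ h)
              rw [Function.update_of_ne hjn]; exact hc j h)
        have hsum_eq : (∑ j ∈ insert n s,
            Function.update c n v j • φ j (Function.update m n m₀ j)) = f + v • φ n m₀ := by
          rw [Finset.sum_insert hns, Function.update_self, Function.update_self, add_comm]
          congr 1
          refine Finset.sum_congr rfl fun j hj => ?_
          have hjn : j ≠ n := fun hh => hns (hh ▸ hj)
          rw [Function.update_of_ne hjn, Function.update_of_ne hjn]
        rwa [hsum_eq] at hIH
      have hg1 := mem_pert (a k n / 2) (le_of_eq (abs_of_nonneg (by linarith)))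
      have hg2 := mem_pert (-(a k n / 2))
        (by rw [abs_neg]; exact le_of_eq (abs_of_nonneg (by linarith)))
      have hdiff : (f + (a k n / 2) • φ n m₀) - (f + (-(a k n / 2)) • φ n m₀)
          = (a k n) • φ n m₀ := by
        rw [add_sub_add_left_eq_sub]
        module
      have hdist : a k n ≤ dist (f + (a k n / 2) • φ n m₀) (f + (-(a k n / 2)) • φ n m₀) := by
        rw [dist_eq_norm, hdiff]
        calc a k n = |a k n| := (abs_of_nonneg hapos.le).symm
          _ ≤ ‖(a k n) • φ n m₀‖ := hlow n m₀ (a k n)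
      have hbdd : Bornology.IsBounded {g | g ∈ szlenkDerivList (L'.map fun i => a k i / 2)
          (dualUnitBall Y) ∧ StrongDual.toWeakDual g ∈ U} :=
        Metric.isBounded_closedBall.subset
          (fun g hg => szlenkDerivList_subset _ (dualUnitBall Y) hg.1)
      have hle := Metric.dist_le_diam_of_mem hbdd ⟨hg1, hmU1⟩ ⟨hg2, hmU2⟩
      calc a k n / 2 < a k n := by linarith
        _ ≤ _ := hdist.trans hle
  -- conclusion
  obtain ⟨k, hk⟩ := (ha_tendsto.eventually (eventually_gt_atTop (2 * M))).exists
  set l : List ℝ := (a k).support.toList.map (fun n => a k n / 2) with hl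
  have hpos : ∀ ε ∈ l, 0 < ε := by
    intro ε hε
    rw [hl, List.mem_map] at hε
    obtain ⟨n, hn, rfl⟩ := hε
    have h1 : 0 < a k n := lt_of_le_of_ne (ha_nonneg k n)
      (Ne.symm (Finsupp.mem_support_iff.mp (Finset.mem_toList.mp hn)))
    linarith
  have hmem : (0 : StrongDual ℝ Y) ∈ szlenkDerivList l (dualUnitBall Y) := by
    have h := main k (a k).support.toList (Finset.nodup_toList _)
      (fun n hn => Finset.mem_toList.mp hn) ∅ (fun _ => 0) (fun _ => 0)
      (fun _ _ => Finset.notMem_empty _)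
      (fun n hn => absurd hn (Finset.notMem_empty n))
    simpa using h
  have hsum := hM l hpos ⟨0, hmem⟩
  have hlsum : l.sum = ((a k).sum fun _ c => c) / 2 := by
    rw [hl, Finset.sum_map_toList, Finsupp.sum, ← Finset.sum_div]
  rw [hlsum] at hsum
  linarith
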